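/- arXiv:2210.05304 — 7 statements merged into one kernel-verified Lean document; each statement's English description precedes it below -/
import Mathlib

section
/- Let ε > 0 and let T be a stopping time with respect to a filtration (F_i). Suppose (X_i)_{i=0}^∞ is an ε-ranking supermartingale with respect to T, i.e., each X_i is F_i-measurable and nonnegative, and E[X_{i+1} | F_i] ≤ X_i − ε·1_{T>i} almost surely for all i. Then P[T < ∞] = 1. -/
open MeasureTheory Filter

/-- If `(X_i)` is an `ε`-ranking supermartingale with respect to the stopping time `T`,
then `T` is almost surely finite. -/
theorem stmt1 {Ω : Type*} {m0 : MeasurableSpace Ω} {μ : Measure Ω} [IsProbabilityMeasure μ]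
    {ℱ : Filtration ℕ m0} {T : Ω → ℕ∞}
    (hT : ∀ i : ℕ, MeasurableSet[ℱ i] {ω | T ω ≤ (i : ℕ∞)})
    {X : ℕ → Ω → ℝ} {ε : ℝ} (hε : 0 < ε)
    (hadapted : Adapted ℱ X) (hint : ∀ i, Integrable (X i) μ)
    (hnn : ∀ i ω, 0 ≤ X i ω)
    (hdec : ∀ i : ℕ, μ[X (i + 1)|ℱ i] ≤ᵐ[μ]
      fun ω => X i ω - ε * Set.indicator {ω | (i : ℕ∞) < T ω} (fun _ => (1 : ℝ)) ω) :
    μ {ω | T ω < ⊤} = 1 := by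
  have hmeas : ∀ i : ℕ, MeasurableSet {ω | (i : ℕ∞) < T ω} := by
    intro i
    have h := ((ℱ.le i) _ (hT i)).compl
    simpa [Set.compl_setOf, not_le] using h
  set S : ℕ → Set Ω := fun i => {ω | (i : ℕ∞) < T ω} with hS
  -- one step decrease
  have hstep : ∀ i, ∫ ω, X (i+1) ω ∂μ ≤ ∫ ω, X i ω ∂μ - ε * (μ (S i)).toReal := by
    intro i
    have hind : Integrable ((S i).indicator fun _ => (1:ℝ)) μ :=
      (integrable_const (1:ℝ)).indicator (hmeas i)
    have hRHS : Integrable (fun ω => X i ω - ε * (S i).indicator (fun _ => (1:ℝ)) ω) μ :=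
      (hint i).sub (hind.const_mul ε)
    have h1 : ∫ ω, X (i+1) ω ∂μ = ∫ ω, (μ[X (i+1)|ℱ i]) ω ∂μ :=
      (integral_condExp (ℱ.le i)).symm
    have h2 : ∫ ω, (μ[X (i+1)|ℱ i]) ω ∂μ
        ≤ ∫ ω, (X i ω - ε * (S i).indicator (fun _ => (1:ℝ)) ω) ∂μ :=
      integral_mono_ae integrable_condExp hRHS (hdec i)
    have h3 : ∫ ω, (X i ω - ε * (S i).indicator (fun _ => (1:ℝ)) ω) ∂μ
        = ∫ ω, X i ω ∂μ - ε * (μ (S i)).toReal := by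
      rw [integral_sub (hint i) (hind.const_mul ε), integral_const_mul,
        integral_indicator_const (1:ℝ) (hmeas i)]
      simp [Measure.real, hS]
    linarith [h1 ▸ h2, h3]
  -- cumulative
  have hcum : ∀ n : ℕ, ∫ ω, X n ω ∂μ
      ≤ ∫ ω, X 0 ω ∂μ - ε * ∑ i ∈ Finset.range n, (μ (S i)).toReal := by
    intro n
    induction n with
    | zero => simp
    | succ n ih =>
      have := hstep n
      rw [Finset.sum_range_succ]
      linarith
  have hXnn : ∀ n, 0 ≤ ∫ ω, X n ω ∂μ := fun n => integral_nonneg (hnn n)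
  -- μ {T = ⊤} ≤ μ (S i)
  have hsub : ∀ i : ℕ, μ {ω | T ω = ⊤} ≤ μ (S i) := by
    intro i
    apply measure_mono
    intro ω hω
    simp only [Set.mem_setOf_eq] at hω ⊢
    simp [hS, hω]
  set p : ℝ := (μ {ω | T ω = ⊤}).toReal with hp
  have hpnn : 0 ≤ p := ENNReal.toReal_nonneg
  have hbound : ∀ n : ℕ, ε * (n * p) ≤ ∫ ω, X 0 ω ∂μ := by
    intro n
    have hle : ∀ i : ℕ, p ≤ (μ (S i)).toReal := fun i =>
      ENNReal.toReal_mono (measure_ne_top μ _) (hsub i)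
    have hsum : (n : ℝ) * p ≤ ∑ i ∈ Finset.range n, (μ (S i)).toReal := by
      calc (n : ℝ) * p = ∑ _i ∈ Finset.range n, p := by simp [mul_comm]
      _ ≤ _ := Finset.sum_le_sum fun i _ => hle i
    have := hcum n
    nlinarith [hXnn n]
  have hp0 : p = 0 := by
    by_contra h
    have hppos : 0 < p := lt_of_le_of_ne hpnn (Ne.symm h)
    obtain ⟨n, hn⟩ := exists_nat_gt ((∫ ω, X 0 ω ∂μ) / (ε * p))
    have := hbound n
    rw [div_lt_iff₀ (by positivity)] at hn
    nlinarith
  have hμ0 : μ {ω | T ω = ⊤} = 0 := by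
    have := measure_ne_top μ {ω | T ω = ⊤}
    exact (ENNReal.toReal_eq_zero_iff _).mp hp0 |>.resolve_right this
  have : {ω | T ω < ⊤} = {ω | T ω = ⊤}ᶜ := by
    ext ω; simp [lt_top_iff_ne_top]
  rw [this, measure_compl (by
    have : {ω | T ω = ⊤} = {ω | T ω ≤ (⊤:ℕ∞)} \ {ω | T ω < ⊤} := by
      ext ω; simp [lt_top_iff_ne_top, le_top]
    -- measurability of {T = ⊤}: it's ⋂ i, S i
    have hEq : {ω | T ω = ⊤} = ⋂ i : ℕ, S i := by
      ext ω
      simp only [Set.mem_iInter, Set.mem_setOf_eq, hS]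
      constructor
      · intro h i; simp [h]
      · intro h
        by_contra hne
        obtain ⟨n, hn⟩ := WithTop.ne_top_iff_exists.mp hne
        exact absurd (h n) (by rw [← hn]; exact lt_irrefl _)
    rw [hEq]; exact MeasurableSet.iInter fun i => hmeas i) (measure_ne_top μ _), hμ0]
  simp
end

section
/- Let ε > 0 and let T be a stopping time with respect to a filtration (F_i). Suppose (X_i)_{i=0}^∞ is an ε-ranking supermartingale with respect to T. Then E[T] ≤ E[X_0] / ε. -/
open MeasureTheory Filter
open scoped ENNReal

lemma enat_cast_eq_tsum (a : ℕ∞) :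
    (a : ℝ≥0∞) = ∑' n : ℕ, if (n : ℕ∞) < a then (1 : ℝ≥0∞) else 0 := by
  induction a using ENat.recTopCoe with
  | top =>
    simp only [ENat.coe_lt_top, if_true]
    rw [ENNReal.tsum_const_eq_top_of_ne_zero one_ne_zero]
    simp
  | coe m =>
    rw [tsum_eq_sum (s := Finset.range m) (by
      intro n hn
      rw [if_neg]
      simp only [Finset.mem_range, not_lt] at hn
      exact not_lt.2 (by exact_mod_cast hn))]
    have : ∀ n ∈ Finset.range m, (if (n : ℕ∞) < (m : ℕ∞) then (1:ℝ≥0∞) else 0) = 1 := by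
      intro n hn
      rw [if_pos]
      exact_mod_cast Finset.mem_range.1 hn
    rw [Finset.sum_congr rfl this]
    simp

/-- If `(X_i)` is an `ε`-ranking supermartingale with respect to the stopping time `T`,
then `E[T] ≤ E[X_0] / ε`. -/
theorem stmt2 {Ω : Type*} {m0 : MeasurableSpace Ω} {μ : Measure Ω} [IsProbabilityMeasure μ]
    {ℱ : Filtration ℕ m0} {T : Ω → ℕ∞}
    (hT : ∀ i : ℕ, MeasurableSet[ℱ i] {ω | T ω ≤ (i : ℕ∞)})
    {X : ℕ → Ω → ℝ} {ε : ℝ} (hε : 0 < ε)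
    (hadapted : Adapted ℱ X) (hint : ∀ i, Integrable (X i) μ)
    (hnn : ∀ i ω, 0 ≤ X i ω)
    (hdec : ∀ i : ℕ, μ[X (i + 1)|ℱ i] ≤ᵐ[μ]
      fun ω => X i ω - ε * Set.indicator {ω | (i : ℕ∞) < T ω} (fun _ => (1 : ℝ)) ω) :
    ∫⁻ ω, (T ω : ℝ≥0∞) ∂μ ≤ ENNReal.ofReal ((∫ ω, X 0 ω ∂μ) / ε) := by
  -- measurability of the survival sets
  have hmeas : ∀ i : ℕ, MeasurableSet {ω | (i : ℕ∞) < T ω} := by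
    intro i
    have : {ω | (i : ℕ∞) < T ω} = {ω | T ω ≤ (i : ℕ∞)}ᶜ := by
      ext ω; simp only [Set.mem_setOf_eq, Set.mem_compl_iff, not_le]
    rw [this]
    exact (ℱ.le i _ (hT i)).compl
  set S : ℕ → ℝ≥0∞ := fun i => μ {ω | (i : ℕ∞) < T ω} with hS
  have hSlt : ∀ i, S i ≠ ⊤ := fun i => measure_ne_top μ _
  -- integrability of indicator
  have hind : ∀ i : ℕ, Integrable (Set.indicator {ω | (i : ℕ∞) < T ω} (fun _ => (1:ℝ))) μ := by
    intro i
    exact (integrable_const (1:ℝ)).indicator (hmeas i)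
  -- step inequality
  have step : ∀ i : ℕ, ∫ ω, X (i+1) ω ∂μ ≤ ∫ ω, X i ω ∂μ - ε * (S i).toReal := by
    intro i
    have h1 : ∫ ω, X (i+1) ω ∂μ = ∫ ω, (μ[X (i+1)|ℱ i]) ω ∂μ :=
      (integral_condExp (ℱ.le i)).symm
    have h2 : ∫ ω, (μ[X (i+1)|ℱ i]) ω ∂μ ≤
        ∫ ω, (X i ω - ε * Set.indicator {ω | (i : ℕ∞) < T ω} (fun _ => (1:ℝ)) ω) ∂μ := by
      apply integral_mono_ae integrable_condExp ((hint i).sub ((hind i).const_mul ε)) (hdec i)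
    have h3 : ∫ ω, (X i ω - ε * Set.indicator {ω | (i : ℕ∞) < T ω} (fun _ => (1:ℝ)) ω) ∂μ
        = ∫ ω, X i ω ∂μ - ε * (S i).toReal := by
      rw [integral_sub (hint i) ((hind i).const_mul ε), integral_const_mul,
        integral_indicator_const _ (hmeas i)]
      simp [hS, Measure.real]
    rw [h1]; rw [h3] at h2; exact h2
  -- partial sums bound
  have key : ∀ n : ℕ, ε * ∑ i ∈ Finset.range n, (S i).toReal ≤ ∫ ω, X 0 ω ∂μ := by
    intro n
    have main : ∀ n : ℕ, ∫ ω, X n ω ∂μ + ε * ∑ i ∈ Finset.range n, (S i).toReal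
        ≤ ∫ ω, X 0 ω ∂μ := by
      intro n
      induction n with
      | zero => simp
      | succ n ih =>
        rw [Finset.sum_range_succ]
        have := step n
        nlinarith [this, ih]
    have := main n
    have hnn' : 0 ≤ ∫ ω, X n ω ∂μ := integral_nonneg (hnn n)
    linarith
  have keysum : ∀ n : ℕ, ∑ i ∈ Finset.range n, (S i).toReal ≤ (∫ ω, X 0 ω ∂μ) / ε := by
    intro n
    rw [le_div_iff₀ hε]
    linarith [key n]
  -- lintegral of T as a tsum
  have hTsum : ∫⁻ ω, (T ω : ℝ≥0∞) ∂μ = ∑' i : ℕ, S i := by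
    have : ∀ ω, (T ω : ℝ≥0∞) = ∑' i : ℕ, Set.indicator {ω | (i : ℕ∞) < T ω} (fun _ => (1:ℝ≥0∞)) ω := by
      intro ω
      rw [enat_cast_eq_tsum]
      congr 1
      ext i
      by_cases h : (i : ℕ∞) < T ω <;> simp [Set.indicator, h]
    calc ∫⁻ ω, (T ω : ℝ≥0∞) ∂μ
        = ∫⁻ ω, ∑' i : ℕ, Set.indicator {ω | (i : ℕ∞) < T ω} (fun _ => (1:ℝ≥0∞)) ω ∂μ := by
          exact lintegral_congr this
      _ = ∑' i : ℕ, ∫⁻ ω, Set.indicator {ω | (i : ℕ∞) < T ω} (fun _ => (1:ℝ≥0∞)) ω ∂μ :=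
          lintegral_tsum (fun i => ((measurable_const).indicator (hmeas i)).aemeasurable)
      _ = ∑' i : ℕ, S i := by
          congr 1; ext i
          rw [lintegral_indicator (hmeas i)]
          simp [hS]
  rw [hTsum]
  -- conclude
  refine Summable.tsum_le_of_sum_le ENNReal.summable ?_
  intro s
  obtain ⟨n, hn⟩ : ∃ n, s ⊆ Finset.range n := ⟨s.sup id + 1, fun i hi =>
    Finset.mem_range.2 (Nat.lt_succ_of_le (Finset.le_sup (f := id) hi))⟩
  calc ∑ i ∈ s, S i ≤ ∑ i ∈ Finset.range n, S i :=
        Finset.sum_le_sum_of_subset hn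
    _ = ENNReal.ofReal (∑ i ∈ Finset.range n, (S i).toReal) := by
        rw [ENNReal.ofReal_sum_of_nonneg (fun i _ => ENNReal.toReal_nonneg)]
        exact Finset.sum_congr rfl fun i _ => (ENNReal.ofReal_toReal (hSlt i)).symm
    _ ≤ ENNReal.ofReal ((∫ ω, X 0 ω ∂μ) / ε) := ENNReal.ofReal_le_ofReal (keysum n)
end

section
/- Let ε > 0 and let T be a stopping time with respect to a filtration (F_i). Suppose (X_i)_{i=0}^∞ is an ε-ranking supermartingale with respect to T. Then for each t ∈ ℕ with t ≥ 1, P[T ≥ t] ≤ E[X_0] / (ε · t). -/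
open MeasureTheory Filter
open scoped ENNReal

/-- If `(X_i)` is an `ε`-ranking supermartingale with respect to the stopping time `T`,
then for each `t ≥ 1`, `P[T ≥ t] ≤ E[X_0] / (ε·t)`. -/
theorem stmt3 {Ω : Type*} {m0 : MeasurableSpace Ω} {μ : Measure Ω} [IsProbabilityMeasure μ]
    {ℱ : Filtration ℕ m0} {T : Ω → ℕ∞}
    (hT : ∀ i : ℕ, MeasurableSet[ℱ i] {ω | T ω ≤ (i : ℕ∞)})
    {X : ℕ → Ω → ℝ} {ε : ℝ} (hε : 0 < ε)
    (hadapted : Adapted ℱ X) (hint : ∀ i, Integrable (X i) μ)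
    (hnn : ∀ i ω, 0 ≤ X i ω)
    (hdec : ∀ i : ℕ, μ[X (i + 1)|ℱ i] ≤ᵐ[μ]
      fun ω => X i ω - ε * Set.indicator {ω | (i : ℕ∞) < T ω} (fun _ => (1 : ℝ)) ω)
    (t : ℕ) (ht : 1 ≤ t) :
    μ {ω | (t : ℕ∞) ≤ T ω} ≤ ENNReal.ofReal ((∫ ω, X 0 ω ∂μ) / (ε * t)) := by
  -- the sets S i = {i < T}
  set S : ℕ → Set Ω := fun i => {ω | (i : ℕ∞) < T ω} with hS
  have hSmeas : ∀ i, MeasurableSet (S i) := by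
    intro i
    have : S i = {ω | T ω ≤ (i : ℕ∞)}ᶜ := by
      ext ω
      simp only [hS, Set.mem_setOf_eq, Set.mem_compl_iff, not_le]
    rw [this]
    exact (ℱ.le i _ (hT i)).compl
  set r : ℝ := (μ {ω | (t : ℕ∞) ≤ T ω}).toReal with hr
  have hrnn : 0 ≤ r := ENNReal.toReal_nonneg
  -- one step inequality
  have hstep : ∀ i : ℕ, ∫ ω, X (i + 1) ω ∂μ ≤ ∫ ω, X i ω ∂μ - ε * (μ (S i)).toReal := by
    intro i
    have hind : Integrable ((S i).indicator fun _ => (1 : ℝ)) μ :=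
      (integrable_const (1 : ℝ)).indicator (hSmeas i)
    have h1 : ∫ ω, X (i + 1) ω ∂μ = ∫ ω, (μ[X (i + 1)|ℱ i]) ω ∂μ :=
      (integral_condExp (ℱ.le i)).symm
    have h2 : ∫ ω, (μ[X (i + 1)|ℱ i]) ω ∂μ
        ≤ ∫ ω, (X i ω - ε * (S i).indicator (fun _ => (1 : ℝ)) ω) ∂μ := by
      refine integral_mono_ae integrable_condExp ((hint i).sub (hind.const_mul ε)) (hdec i)
    have h3 : ∫ ω, (X i ω - ε * (S i).indicator (fun _ => (1 : ℝ)) ω) ∂μ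
        = ∫ ω, X i ω ∂μ - ε * (μ (S i)).toReal := by
      rw [integral_sub (hint i) (hind.const_mul ε), integral_const_mul,
        integral_indicator_const _ (hSmeas i)]
      simp [mul_comm, measureReal_def]
    rw [h1]; rw [h3] at h2; exact h2
  -- monotonicity: for i < t, r ≤ μ.real (S i)
  have hmono : ∀ i < t, r ≤ (μ (S i)).toReal := by
    intro i hi
    apply ENNReal.toReal_mono (measure_ne_top μ _)
    apply measure_mono
    intro ω hω
    have : (i : ℕ∞) < (t : ℕ∞) := by exact_mod_cast hi
    exact lt_of_lt_of_le this hω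
  -- induction
  have key : ∀ n ≤ t, ∫ ω, X n ω ∂μ + ε * n * r ≤ ∫ ω, X 0 ω ∂μ := by
    intro n hn
    induction n with
    | zero => simp
    | succ k ih =>
      have hk : k < t := hn
      have ihk := ih (le_of_lt hk)
      have h1 := hstep k
      have h2 := hmono k hk
      have : ∫ ω, X (k + 1) ω ∂μ + ε * (k + 1) * r
          ≤ ∫ ω, X k ω ∂μ + ε * k * r := by
        push_cast
        nlinarith [mul_le_mul_of_nonneg_left h2 hε.le]
      push_cast
      push_cast at this
      linarith
  have hXt : 0 ≤ ∫ ω, X t ω ∂μ := integral_nonneg (hnn t)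
  have hkey := key t le_rfl
  have htpos : (0 : ℝ) < ε * t := by
    have : (0 : ℝ) < t := by exact_mod_cast ht
    positivity
  have hr2 : r ≤ (∫ ω, X 0 ω ∂μ) / (ε * t) := by
    rw [le_div_iff₀ htpos]
    nlinarith
  calc μ {ω | (t : ℕ∞) ≤ T ω} = ENNReal.ofReal r := by
        rw [hr, ENNReal.ofReal_toReal (measure_ne_top μ _)]
    _ ≤ ENNReal.ofReal ((∫ ω, X 0 ω ∂μ) / (ε * t)) := ENNReal.ofReal_le_ofReal hr2
end

section
/- Let (X_i)_{i=0}^∞ be an ε-ranking supermartingale with respect to a stopping time T, for some ε > 0. Then the expected value E[X_0] satisfies E[X_0] ≥ ε · E[T]; in particular, if E[X_0] is finite then T is almost surely finite and integrable. -/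
open MeasureTheory Filter
open scoped ENNReal

lemma enat_coe_eq_tsum (m : ℕ∞) :
    (m : ℝ≥0∞) = ∑' i : ℕ, if (i : ℕ∞) < m then (1 : ℝ≥0∞) else 0 := by
  cases m with
  | top =>
    have : ∀ i : ℕ, ((i : ℕ∞) < (⊤ : ℕ∞)) := fun i => lt_of_le_of_ne le_top (by simp)
    simp only [this, if_true]
    rw [ENNReal.tsum_const_eq_top_of_ne_zero one_ne_zero]
    simp
  | coe n =>
    rw [tsum_eq_sum (s := Finset.range n) (fun i hi => by
      simp only [Finset.mem_range, not_lt] at hi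
      rw [if_neg]
      simpa using hi)]
    have : ∀ i ∈ Finset.range n, (if (i : ℕ∞) < (n : ℕ∞) then (1 : ℝ≥0∞) else 0) = 1 := by
      intro i hi
      rw [if_pos]
      exact_mod_cast Finset.mem_range.mp hi
    rw [Finset.sum_congr rfl this]
    simp

/-- If `(X_i)` is an `ε`-ranking supermartingale with respect to the stopping time `T`, then
`E[X_0] ≥ ε · E[T]`; in particular (`E[X_0]` being finite), `T` is almost surely finite
and integrable. -/
theorem stmt4 {Ω : Type*} {m0 : MeasurableSpace Ω} {μ : Measure Ω} [IsProbabilityMeasure μ]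
    {ℱ : Filtration ℕ m0} {T : Ω → ℕ∞}
    (hT : ∀ i : ℕ, MeasurableSet[ℱ i] {ω | T ω ≤ (i : ℕ∞)})
    {X : ℕ → Ω → ℝ} {ε : ℝ} (hε : 0 < ε)
    (hadapted : Adapted ℱ X) (hint : ∀ i, Integrable (X i) μ)
    (hnn : ∀ i ω, 0 ≤ X i ω)
    (hdec : ∀ i : ℕ, μ[X (i + 1)|ℱ i] ≤ᵐ[μ]
      fun ω => X i ω - ε * Set.indicator {ω | (i : ℕ∞) < T ω} (fun _ => (1 : ℝ)) ω) :
    ENNReal.ofReal ε * ∫⁻ ω, (T ω : ℝ≥0∞) ∂μ ≤ ENNReal.ofReal (∫ ω, X 0 ω ∂μ) ∧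
      μ {ω | T ω < ⊤} = 1 ∧ ∫⁻ ω, (T ω : ℝ≥0∞) ∂μ < ⊤ := by
  set A : ℕ → Set Ω := fun i => {ω | (i : ℕ∞) < T ω} with hA_def
  have hA : ∀ i, MeasurableSet (A i) := by
    intro i
    have : A i = {ω | T ω ≤ (i : ℕ∞)}ᶜ := by
      ext ω; simp [hA_def, not_le]
    rw [this]
    exact (ℱ.le i _ (hT i)).compl
  -- representation of T as a tsum of indicators
  have hrep : ∀ ω, (T ω : ℝ≥0∞) = ∑' i : ℕ, (A i).indicator (fun _ => (1 : ℝ≥0∞)) ω := by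
    intro ω
    rw [enat_coe_eq_tsum (T ω)]
    refine tsum_congr fun i => ?_
    rw [Set.indicator_apply]
    rfl
  have hmeas : Measurable fun ω => (T ω : ℝ≥0∞) := by
    have : (fun ω => (T ω : ℝ≥0∞)) = fun ω => ∑' i : ℕ, (A i).indicator (fun _ => (1 : ℝ≥0∞)) ω :=
      funext hrep
    rw [this]
    exact Measurable.ennreal_tsum fun i => measurable_const.indicator (hA i)
  have hlint : ∫⁻ ω, (T ω : ℝ≥0∞) ∂μ = ∑' i : ℕ, μ (A i) := by
    calc ∫⁻ ω, (T ω : ℝ≥0∞) ∂μ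
        = ∫⁻ ω, ∑' i : ℕ, (A i).indicator (fun _ => (1 : ℝ≥0∞)) ω ∂μ := by
          exact lintegral_congr hrep
      _ = ∑' i : ℕ, ∫⁻ ω, (A i).indicator (fun _ => (1 : ℝ≥0∞)) ω ∂μ :=
          lintegral_tsum fun i => (measurable_const.indicator (hA i)).aemeasurable
      _ = ∑' i : ℕ, μ (A i) := by
          refine tsum_congr fun i => ?_
          rw [lintegral_indicator_const (hA i), one_mul]
  -- the one-step inequality
  have hind_int : ∀ i, Integrable ((A i).indicator (fun _ => (1 : ℝ))) μ :=
    fun i => (integrable_const (1 : ℝ)).indicator (hA i)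
  have step : ∀ i, ε * (μ (A i)).toReal + ∫ ω, X (i + 1) ω ∂μ ≤ ∫ ω, X i ω ∂μ := by
    intro i
    have h1 : ∫ ω, (μ[X (i + 1)|ℱ i]) ω ∂μ = ∫ ω, X (i + 1) ω ∂μ :=
      integral_condExp (ℱ.le i)
    have h2 : ∫ ω, (μ[X (i + 1)|ℱ i]) ω ∂μ ≤
        ∫ ω, (X i ω - ε * (A i).indicator (fun _ => (1 : ℝ)) ω) ∂μ := by
      refine integral_mono_ae (integrable_condExp) ((hint i).sub ((hind_int i).const_mul ε)) ?_
      exact hdec i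
    have h3 : ∫ ω, (X i ω - ε * (A i).indicator (fun _ => (1 : ℝ)) ω) ∂μ
        = ∫ ω, X i ω ∂μ - ε * (μ (A i)).toReal := by
      rw [integral_sub (hint i) ((hind_int i).const_mul ε), integral_const_mul,
        integral_indicator_const (1 : ℝ) (hA i)]
      simp [Measure.real]
    rw [h1] at h2
    rw [h3] at h2
    linarith
  -- cumulative inequality
  have keyn : ∀ n, ε * ∑ i ∈ Finset.range n, (μ (A i)).toReal ≤ ∫ ω, X 0 ω ∂μ := by
    intro n
    have cum : ∀ n, ε * ∑ i ∈ Finset.range n, (μ (A i)).toReal + ∫ ω, X n ω ∂μ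
        ≤ ∫ ω, X 0 ω ∂μ := by
      intro n
      induction n with
      | zero => simp
      | succ n ih =>
        have := step n
        rw [Finset.sum_range_succ]
        nlinarith
    have hX : 0 ≤ ∫ ω, X n ω ∂μ := integral_nonneg (fun ω => hnn n ω)
    linarith [cum n]
  -- the main inequality in ℝ≥0∞
  have main : ENNReal.ofReal ε * ∫⁻ ω, (T ω : ℝ≥0∞) ∂μ ≤ ENNReal.ofReal (∫ ω, X 0 ω ∂μ) := by
    rw [hlint, ENNReal.tsum_eq_iSup_nat, ENNReal.mul_iSup]
    refine iSup_le fun n => ?_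
    have hsum : ∑ i ∈ Finset.range n, μ (A i)
        = ENNReal.ofReal (∑ i ∈ Finset.range n, (μ (A i)).toReal) := by
      rw [ENNReal.ofReal_sum_of_nonneg (fun i _ => ENNReal.toReal_nonneg)]
      refine Finset.sum_congr rfl fun i _ => ?_
      rw [ENNReal.ofReal_toReal (measure_ne_top μ (A i))]
    rw [hsum, ← ENNReal.ofReal_mul hε.le]
    exact ENNReal.ofReal_le_ofReal (keyn n)
  have hfin : ∫⁻ ω, (T ω : ℝ≥0∞) ∂μ < ⊤ := by
    by_contra h
    push_neg at h
    have htop : ∫⁻ ω, (T ω : ℝ≥0∞) ∂μ = ⊤ := top_le_iff.mp h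
    rw [htop, ENNReal.mul_top (by simp [ENNReal.ofReal_eq_zero, not_le, hε])] at main
    exact ENNReal.ofReal_ne_top (top_le_iff.mp main)
  refine ⟨main, ?_, hfin⟩
  have hae : ∀ᵐ ω ∂μ, (T ω : ℝ≥0∞) < ⊤ := ae_lt_top hmeas hfin.ne
  have hset : {ω | T ω < ⊤} = {ω | (T ω : ℝ≥0∞) < ⊤} := by
    ext ω
    simp only [Set.mem_setOf_eq, ← ENat.toENNReal_top, ENat.toENNReal_lt]
  have hmeas_set : MeasurableSet {ω | (T ω : ℝ≥0∞) < ⊤} :=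
    measurableSet_lt hmeas measurable_const
  rw [hset, ← prob_compl_eq_zero_iff hmeas_set]
  have := ae_iff.mp hae
  simpa [Set.compl_setOf] using this
end

section
/- Let p ∈ [0, 1) and consider a Markov chain on a state space X with a measurable set S ⊆ G ⊆ X such that (a) from every state, the chain reaches S with probability 1, and (b) from every state in S, the probability of ever leaving G is at most p. Then with probability 1, the chain eventually enters S and never leaves G afterwards; i.e., the chain satisfies the persistence property 'eventually always in G' almost surely. -/
open MeasureTheory Filter
open scoped ENNReal

/-- Trajectory of a time-homogeneous Markov chain generated by the measurable step function
`step` driven by the i.i.d. noise sequence `W`. -/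
def traj {Xsp Nsp Ω : Type*} (step : Xsp → Nsp → Xsp) (W : ℕ → Ω → Nsp) (x0 : Xsp) (ω : Ω) :
    ℕ → Xsp
  | 0 => x0
  | t + 1 => step (traj step W x0 ω t) (W t ω)

namespace Stmt5Aux

open ProbabilityTheory

variable {Xsp Nsp Ω : Type*}

/-- Trajectory driven directly by a noise sequence. -/
def trj (step : Xsp → Nsp → Xsp) (x : Xsp) (w : ℕ → Nsp) : ℕ → Xsp
  | 0 => x
  | t + 1 => step (trj step x w t) (w t)

lemma traj_eq_trj (step : Xsp → Nsp → Xsp) (W : ℕ → Ω → Nsp) (x : Xsp) (ω : Ω) :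
    ∀ t, traj step W x ω t = trj step x (fun k => W k ω) t
  | 0 => rfl
  | t + 1 => by
      rw [traj, trj, traj_eq_trj step W x ω t]

lemma trj_congr (step : Xsp → Nsp → Xsp) (x : Xsp) {w w' : ℕ → Nsp} :
    ∀ t, (∀ k < t, w k = w' k) → trj step x w t = trj step x w' t
  | 0, _ => rfl
  | t + 1, h => by
      rw [trj, trj, trj_congr step x t (fun k hk => h k (Nat.lt_succ_of_lt hk)),
        h t (Nat.lt_succ_self t)]

lemma trj_add (step : Xsp → Nsp → Xsp) (x : Xsp) (w : ℕ → Nsp) (s : ℕ) :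
    ∀ t, trj step x w (s + t) = trj step (trj step x w s) (fun k => w (s + k)) t
  | 0 => rfl
  | t + 1 => by
      show trj step x w ((s + t) + 1) = _
      rw [trj, trj, trj_add step x w s t]

variable [MeasurableSpace Xsp] [MeasurableSpace Nsp] [MeasurableSpace Ω]

lemma measurable_trj {step : Xsp → Nsp → Xsp} (hstep : Measurable (Function.uncurry step)) :
    ∀ t, Measurable (fun q : Xsp × (ℕ → Nsp) => trj step q.1 q.2 t)
  | 0 => measurable_fst
  | t + 1 => by
      have ih := measurable_trj hstep t
      exact hstep.comp (ih.prodMk ((measurable_pi_apply t).comp measurable_snd))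

/-- Padding of a finite block of noises into an infinite sequence. -/
noncomputable def pad [Nonempty Nsp] (s : ℕ) (v : Fin s → Nsp) : ℕ → Nsp :=
  fun k => if h : k < s then v ⟨k, h⟩ else Classical.arbitrary Nsp

lemma pad_eq [Nonempty Nsp] (s : ℕ) (v : Fin s → Nsp) {k : ℕ} (hk : k < s) :
    pad s v k = v ⟨k, hk⟩ := by simp [pad, hk]

lemma measurable_pad [Nonempty Nsp] (s : ℕ) : Measurable (pad (Nsp := Nsp) s) := by
  refine measurable_pi_lambda _ fun k => ?_
  by_cases h : k < s
  · simpa [pad, h] using measurable_pi_apply (⟨k, h⟩ : Fin s)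
  · simp only [pad, h, dif_neg, not_false_iff]
    exact measurable_const

lemma blockLaw {ι : Type*} [Fintype ι]
    (μ : Measure Ω) (d : Measure Nsp) [IsProbabilityMeasure μ] [SigmaFinite d]
    (W : ℕ → Ω → Nsp) (hWmeas : ∀ t, Measurable (W t))
    (hWlaw : ∀ t, Measure.map (W t) μ = d)
    (hWindep : iIndepFun W μ)
    (g : ι → ℕ) (hg : Function.Injective g) :
    Measure.map (fun ω (i : ι) => W (g i) ω) μ = Measure.pi (fun _ => d) := by
  classical
  refine (Measure.pi_eq fun s hs => ?_).symm
  rw [Measure.map_apply (measurable_pi_lambda _ fun i => hWmeas (g i))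
    (MeasurableSet.univ_pi hs)]
  have hpre : (fun ω (i : ι) => W (g i) ω) ⁻¹' (Set.univ.pi s)
      = ⋂ j ∈ Finset.image g Finset.univ,
          W j ⁻¹' (Function.extend g s (fun _ => Set.univ) j) := by
    rw [Finset.set_biInter_finset_image]
    ext ω
    simp [hg.extend_apply]
  rw [hpre, hWindep.measure_inter_preimage_eq_mul _ (fun j hj => ?_),
    Finset.prod_image (fun a _ b _ h => hg h)]
  · refine Finset.prod_congr rfl fun i _ => ?_
    rw [hg.extend_apply, ← hWlaw (g i), Measure.map_apply (hWmeas (g i)) (hs i)]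
  · simp only [Finset.mem_image] at hj
    obtain ⟨i, _, rfl⟩ := hj
    rw [hg.extend_apply]
    exact hs i

lemma shiftLaw (μ : Measure Ω) (d : Measure Nsp) [IsProbabilityMeasure μ]
    [IsProbabilityMeasure d]
    (W : ℕ → Ω → Nsp) (hWmeas : ∀ t, Measurable (W t))
    (hWlaw : ∀ t, Measure.map (W t) μ = d)
    (hWindep : iIndepFun W μ) (s : ℕ) :
    Measure.map (fun ω (k : ℕ) => W (s + k) ω) μ
      = Measure.map (fun ω (k : ℕ) => W k ω) μ := by
  have hm : ∀ c : ℕ, Measurable fun ω (k : ℕ) => W (c + k) ω := fun c =>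
    measurable_pi_lambda _ fun k => hWmeas (c + k)
  have key : ∀ (c : ℕ) (I : Finset ℕ) (A : Set (∀ _ : I, Nsp)), MeasurableSet A →
      Measure.map (fun ω (k : ℕ) => W (c + k) ω) μ (cylinder I A)
        = Measure.pi (fun _ : I => d) A := by
    intro c I A hA
    rw [Measure.map_apply (hm c) (MeasurableSet.cylinder I hA)]
    have hinj : Function.Injective (fun i : I => c + (i : ℕ)) := fun a b h => by
      apply Subtype.ext
      have h' : c + (a : ℕ) = c + (b : ℕ) := h
      omega
    have hrw : (fun ω (k : ℕ) => W (c + k) ω) ⁻¹' cylinder I A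
        = (fun ω (i : I) => W (c + (i : ℕ)) ω) ⁻¹' A := rfl
    rw [hrw, ← Measure.map_apply (measurable_pi_lambda _ fun i => hWmeas _) hA,
      blockLaw μ d W hWmeas hWlaw hWindep (fun i : I => c + (i : ℕ)) hinj]
  have h0 : (fun ω (k : ℕ) => W k ω) = fun ω (k : ℕ) => W (0 + k) ω := by
    funext ω k
    rw [Nat.zero_add]
  refine MeasureTheory.ext_of_generate_finite (measurableCylinders fun _ : ℕ => Nsp)
    generateFrom_measurableCylinders.symm isPiSystem_measurableCylinders
    (fun t ht => ?_) ?_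
  · obtain ⟨I, A, hA, rfl⟩ := (mem_measurableCylinders t).mp ht
    rw [key s I A hA, h0, key 0 I A hA]
  · haveI : IsProbabilityMeasure (Measure.map (fun ω (k : ℕ) => W (s + k) ω) μ) :=
      Measure.isProbabilityMeasure_map (hm s).aemeasurable
    haveI : IsProbabilityMeasure (Measure.map (fun ω (k : ℕ) => W k ω) μ) :=
      Measure.isProbabilityMeasure_map (measurable_pi_lambda _ fun k => hWmeas k).aemeasurable
    rw [measure_univ, measure_univ]

lemma indepBlocks (μ : Measure Ω) [IsProbabilityMeasure μ]
    (W : ℕ → Ω → Nsp) (hWmeas : ∀ t, Measurable (W t))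
    (hWindep : iIndepFun W μ) (s : ℕ) :
    IndepFun (fun ω (i : Fin s) => W i ω) (fun ω (k : ℕ) => W (s + k) ω) μ := by
  have hdisj : Disjoint {i : ℕ | i < s} {i : ℕ | s ≤ i} :=
    Set.disjoint_left.mpr fun a ha hb => by
      simp only [Set.mem_setOf_eq] at ha hb
      omega
  have h := indep_iSup_of_disjoint
    (m := fun i => MeasurableSpace.comap (W i) inferInstance)
    (fun i => (hWmeas i).comap_le) ((iIndepFun_iff_iIndep _ _ _).mp hWindep) hdisj
  rw [IndepFun_iff_Indep]
  have h1 : MeasurableSpace.comap (fun ω (i : Fin s) => W i ω) MeasurableSpace.pi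
      ≤ ⨆ i ∈ {i : ℕ | i < s}, MeasurableSpace.comap (W i) inferInstance := by
    set M1 : MeasurableSpace Ω :=
      ⨆ i ∈ {i : ℕ | i < s}, MeasurableSpace.comap (W i) inferInstance with hM1
    refine Measurable.comap_le (m₁ := M1) ?_
    refine @measurable_pi_lambda Ω (Fin s) (fun _ => Nsp) M1 _ _ fun i => ?_
    exact Measurable.of_comap_le (le_biSup (fun j : ℕ => MeasurableSpace.comap (W j) inferInstance) (show (i : ℕ) ∈ {i : ℕ | i < s} from i.isLt))
  have h2 : MeasurableSpace.comap (fun ω (k : ℕ) => W (s + k) ω) MeasurableSpace.pi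
      ≤ ⨆ i ∈ {i : ℕ | s ≤ i}, MeasurableSpace.comap (W i) inferInstance := by
    set M2 : MeasurableSpace Ω :=
      ⨆ i ∈ {i : ℕ | s ≤ i}, MeasurableSpace.comap (W i) inferInstance with hM2
    refine Measurable.comap_le (m₁ := M2) ?_
    refine @measurable_pi_lambda Ω ℕ (fun _ => Nsp) M2 _ _ fun k => ?_
    exact Measurable.of_comap_le (le_biSup (fun j : ℕ => MeasurableSpace.comap (W j) inferInstance) (show (s + k : ℕ) ∈ {i : ℕ | s ≤ i} from Nat.le_add_right s k))
  exact indep_of_indep_of_le_left (indep_of_indep_of_le_right h h2) h1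

lemma key (μ : Measure Ω) [IsProbabilityMeasure μ] (d : Measure Nsp)
    [IsProbabilityMeasure d]
    (W : ℕ → Ω → Nsp) (hWmeas : ∀ t, Measurable (W t))
    (hWlaw : ∀ t, Measure.map (W t) μ = d)
    (hWindep : iIndepFun W μ)
    {step : Xsp → Nsp → Xsp} (hstep : Measurable (Function.uncurry step))
    (x : Xsp) (s : ℕ) {E' : Set (Fin s → Nsp)} (hE' : MeasurableSet E')
    {C : Set (Xsp × (ℕ → Nsp))} (hC : MeasurableSet C) :
    μ ((fun ω (i : Fin s) => W i ω) ⁻¹' E'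
        ∩ (fun ω => (traj step W x ω s, fun k => W (s + k) ω)) ⁻¹' C)
      = ∫⁻ ω in (fun ω (i : Fin s) => W i ω) ⁻¹' E',
          (Measure.map (fun ω (k : ℕ) => W k ω) μ) {w | (traj step W x ω s, w) ∈ C} ∂μ := by
  haveI : Nonempty Nsp := by
    by_contra h
    rw [not_nonempty_iff] at h
    have h1 := measure_univ (μ := d)
    rw [Set.univ_eq_empty_iff.mpr h, measure_empty] at h1
    exact zero_ne_one h1
  have hZ1 : Measurable fun ω (i : Fin s) => W i ω :=
    measurable_pi_lambda _ fun i => hWmeas i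
  have hZ2 : Measurable fun ω (k : ℕ) => W (s + k) ω :=
    measurable_pi_lambda _ fun k => hWmeas (s + k)
  have hWb : Measurable fun ω (k : ℕ) => W k ω := measurable_pi_lambda _ fun k => hWmeas k
  set ν := Measure.map (fun ω (k : ℕ) => W k ω) μ with hν
  haveI : IsProbabilityMeasure ν := Measure.isProbabilityMeasure_map hWb.aemeasurable
  set g : (Fin s → Nsp) → Xsp := fun v => trj step x (pad s v) s with hgdef
  have hg : Measurable g :=
    (measurable_trj hstep s).comp (measurable_const.prodMk (measurable_pad s))
  have hXg : ∀ ω, traj step W x ω s = g (fun i : Fin s => W i ω) := by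
    intro ω
    rw [traj_eq_trj]
    exact trj_congr step x s fun k hk => by rw [pad_eq s _ hk]
  set D : Set ((Fin s → Nsp) × (ℕ → Nsp)) :=
    {q | q.1 ∈ E' ∧ (g q.1, q.2) ∈ C} with hDdef
  have hD : MeasurableSet D :=
    (hE'.preimage measurable_fst).inter
      (hC.preimage ((hg.comp measurable_fst).prodMk measurable_snd))
  have hset : (fun ω (i : Fin s) => W i ω) ⁻¹' E'
      ∩ (fun ω => (traj step W x ω s, fun k => W (s + k) ω)) ⁻¹' C
      = (fun ω => ((fun i : Fin s => W i ω), fun k : ℕ => W (s + k) ω)) ⁻¹' D := by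
    ext ω
    simp only [Set.mem_inter_iff, Set.mem_preimage, hDdef, Set.mem_setOf_eq, hXg ω]
  have hpair_law : Measure.map
      (fun ω => ((fun i : Fin s => W i ω), fun k : ℕ => W (s + k) ω)) μ
      = (Measure.map (fun ω (i : Fin s) => W i ω) μ).prod ν := by
    rw [hν, ← shiftLaw μ d W hWmeas hWlaw hWindep s]
    exact (indepFun_iff_map_prod_eq_prod_map_map hZ1.aemeasurable hZ2.aemeasurable).mp
      (indepBlocks μ W hWmeas hWindep s)
  have hmeasurand : Measurable fun v : Fin s → Nsp => ν {w | (g v, w) ∈ C} := by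
    have : Measurable fun y : Xsp => ν (Prod.mk y ⁻¹' C) :=
      measurable_measure_prodMk_left hC
    exact this.comp hg
  calc μ ((fun ω (i : Fin s) => W i ω) ⁻¹' E'
        ∩ (fun ω => (traj step W x ω s, fun k => W (s + k) ω)) ⁻¹' C)
      = Measure.map (fun ω => ((fun i : Fin s => W i ω), fun k : ℕ => W (s + k) ω)) μ D := by
        rw [hset, Measure.map_apply (hZ1.prodMk hZ2) hD]
    _ = (Measure.map (fun ω (i : Fin s) => W i ω) μ).prod ν D := by rw [hpair_law]
    _ = ∫⁻ v, ν (Prod.mk v ⁻¹' D) ∂(Measure.map (fun ω (i : Fin s) => W i ω) μ) :=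
        Measure.prod_apply hD
    _ = ∫⁻ v, E'.indicator (fun v => ν {w | (g v, w) ∈ C}) v
          ∂(Measure.map (fun ω (i : Fin s) => W i ω) μ) := by
        refine lintegral_congr fun v => ?_
        by_cases hv : v ∈ E'
        · rw [Set.indicator_of_mem hv]
          congr 1
          ext w
          simp [hDdef, hv]
        · rw [Set.indicator_of_notMem hv]
          have : Prod.mk v ⁻¹' D = ∅ :=
            Set.eq_empty_iff_forall_notMem.mpr fun w hw => hv hw.1
          rw [this, measure_empty]
    _ = ∫⁻ v in E', ν {w | (g v, w) ∈ C}
          ∂(Measure.map (fun ω (i : Fin s) => W i ω) μ) := lintegral_indicator hE' _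
    _ = ∫⁻ ω in (fun ω (i : Fin s) => W i ω) ⁻¹' E',
          ν {w | (g (fun i : Fin s => W i ω), w) ∈ C} ∂μ := setLIntegral_map hE' hmeasurand hZ1
    _ = ∫⁻ ω in (fun ω (i : Fin s) => W i ω) ⁻¹' E',
          ν {w | (traj step W x ω s, w) ∈ C} ∂μ := by
        refine lintegral_congr fun ω => ?_
        rw [hXg ω]

end Stmt5Aux

/-- If from every state the chain reaches `S ⊆ G` with probability 1, and from every state of
`S` it ever leaves `G` with probability at most `p < 1`, then from every initial state the
chain is eventually always in `G` almost surely. -/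
theorem stmt5 {Xsp Nsp Ω : Type*} [MeasurableSpace Xsp] [MeasurableSpace Nsp]
    [MeasurableSpace Ω]
    (μ : Measure Ω) [IsProbabilityMeasure μ] (d : Measure Nsp) [IsProbabilityMeasure d]
    (W : ℕ → Ω → Nsp) (hWmeas : ∀ t, Measurable (W t))
    (hWlaw : ∀ t, Measure.map (W t) μ = d)
    (hWindep : ProbabilityTheory.iIndepFun W μ)
    (step : Xsp → Nsp → Xsp) (hstep : Measurable (Function.uncurry step))
    (S G : Set Xsp) (hS : MeasurableSet S) (hG : MeasurableSet G) (hSG : S ⊆ G)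
    (p : ℝ) (hp0 : 0 ≤ p) (hp1 : p < 1)
    (hreach : ∀ x : Xsp, μ {ω | ∃ t, traj step W x ω t ∈ S} = 1)
    (hleave : ∀ x ∈ S, μ {ω | ∃ t, traj step W x ω t ∉ G} ≤ ENNReal.ofReal p) :
    ∀ x : Xsp, μ {ω | ∃ N, ∀ t ≥ N, traj step W x ω t ∈ G} = 1 := by
  intro x
  classical
  haveI : Nonempty Nsp := by
    by_contra h
    rw [not_nonempty_iff] at h
    have h1 := measure_univ (μ := d)
    rw [Set.univ_eq_empty_iff.mpr h, measure_empty] at h1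
    exact zero_ne_one h1
  have hWbmeas : Measurable fun ω (k : ℕ) => W k ω := measurable_pi_lambda _ fun k => hWmeas k
  set ν := Measure.map (fun ω (k : ℕ) => W k ω) μ with hν
  haveI : IsProbabilityMeasure ν := Measure.isProbabilityMeasure_map hWbmeas.aemeasurable
  have htraj : ∀ (y : Xsp) (t : ℕ), Measurable fun ω => traj step W y ω t := by
    intro y t
    induction t with
    | zero => exact measurable_const
    | succ t ih => exact hstep.comp (ih.prodMk (hWmeas t))
  set F : Xsp → Set Ω := fun y => {ω | ∀ N, ∃ t ≥ N, traj step W y ω t ∉ G} with hF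
  have hFmeas : ∀ y, MeasurableSet (F y) := by
    intro y
    have hrw : F y = ⋂ N, ⋃ t, ⋃ _ : N ≤ t, (fun ω => traj step W y ω t) ⁻¹' Gᶜ := by
      ext ω
      simp [hF]
    rw [hrw]
    exact MeasurableSet.iInter fun N => MeasurableSet.iUnion fun t =>
      MeasurableSet.iUnion fun _ => (htraj y t) hG.compl
  set β : ℝ≥0∞ := ⨆ y, μ (F y) with hβ
  have hβ1 : β ≤ 1 := iSup_le fun y => prob_le_one
  set CF : Set (Xsp × (ℕ → Nsp)) :=
    {q | ∀ N, ∃ t ≥ N, Stmt5Aux.trj step q.1 q.2 t ∉ G} with hCF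
  have hCFmeas : MeasurableSet CF := by
    have hrw : CF = ⋂ N, ⋃ t, ⋃ _ : N ≤ t,
        (fun q : Xsp × (ℕ → Nsp) => Stmt5Aux.trj step q.1 q.2 t) ⁻¹' Gᶜ := by
      ext q
      simp [hCF]
    rw [hrw]
    exact MeasurableSet.iInter fun N => MeasurableSet.iUnion fun t =>
      MeasurableSet.iUnion fun _ => (Stmt5Aux.measurable_trj hstep t) hG.compl
  have hslice : ∀ y : Xsp, ν {w | (y, w) ∈ CF} = μ (F y) := by
    intro y
    have hsm : MeasurableSet {w : ℕ → Nsp | (y, w) ∈ CF} := measurable_prodMk_left hCFmeas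
    rw [hν, Measure.map_apply hWbmeas hsm]
    congr 1
    ext ω
    simp only [Set.mem_preimage, Set.mem_setOf_eq, hCF, hF]
    constructor <;> intro h N <;> obtain ⟨t, ht, hg'⟩ := h N <;>
      exact ⟨t, ht, by rw [Stmt5Aux.traj_eq_trj] at *; exact hg'⟩
  -- the shifted frequently-outside-G event equals the global one
  have hFshift : ∀ (y : Xsp) (s : ℕ),
      (fun ω => (traj step W y ω s, fun k => W (s + k) ω)) ⁻¹' CF = F y := by
    intro y s
    ext ω
    simp only [Set.mem_preimage, Set.mem_setOf_eq, hCF, hF]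
    have harr : ∀ t, Stmt5Aux.trj step (traj step W y ω s) (fun k => W (s + k) ω) t
        = traj step W y ω (s + t) := by
      intro t
      rw [Stmt5Aux.traj_eq_trj step W y ω (s + t), Stmt5Aux.trj_add,
        ← Stmt5Aux.traj_eq_trj step W y ω s]
    constructor
    · intro h N
      obtain ⟨t, ht, hh⟩ := h N
      exact ⟨s + t, le_trans ht (Nat.le_add_left t s), by rwa [harr t] at hh⟩
    · intro h N
      obtain ⟨t, ht, hh⟩ := h (s + N)
      refine ⟨t - s, by omega, ?_⟩
      rw [harr, show s + (t - s) = t by omega]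
      exact hh
  -- main estimate from the Markov property
  have hbound : ∀ (y : Xsp) (s : ℕ) (E' : Set (Fin s → Nsp)), MeasurableSet E' →
      ∀ b : ℝ≥0∞, (∀ ω, (fun i : Fin s => W i ω) ∈ E' → μ (F (traj step W y ω s)) ≤ b) →
      μ ((fun ω (i : Fin s) => W i ω) ⁻¹' E' ∩ F y)
        ≤ b * μ ((fun ω (i : Fin s) => W i ω) ⁻¹' E') := by
    intro y s E' hE' b hb
    have hpre : MeasurableSet ((fun ω (i : Fin s) => W i ω) ⁻¹' E') :=
      hE'.preimage (measurable_pi_lambda _ fun i => hWmeas i)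
    rw [← hFshift y s, Stmt5Aux.key μ d W hWmeas hWlaw hWindep hstep y s hE' hCFmeas]
    calc ∫⁻ ω in (fun ω (i : Fin s) => W i ω) ⁻¹' E',
          ν {w | (traj step W y ω s, w) ∈ CF} ∂μ
        ≤ ∫⁻ _ in (fun ω (i : Fin s) => W i ω) ⁻¹' E', b ∂μ := by
          refine setLIntegral_mono' hpre fun ω hω => ?_
          rw [hslice]
          exact hb ω hω
      _ = b * μ ((fun ω (i : Fin s) => W i ω) ⁻¹' E') := setLIntegral_const _ _
  -- block representation of trajectory-defined events
  have hblock : ∀ (y : Xsp) (s : ℕ) (ω : Ω) (u : ℕ), u ≤ s →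
      traj step W y ω u = Stmt5Aux.trj step y (Stmt5Aux.pad s fun i : Fin s => W i ω) u := by
    intro y s ω u hu
    rw [Stmt5Aux.traj_eq_trj]
    exact Stmt5Aux.trj_congr step y u fun k hk => by
      rw [Stmt5Aux.pad_eq s _ (lt_of_lt_of_le hk hu)]
  -- sub-claim: from states of S
  have hsub : ∀ y ∈ S, μ (F y) ≤ ENNReal.ofReal p * β := by
    intro y hy
    set B : ℕ → Set Ω :=
      fun e => {ω | traj step W y ω e ∉ G ∧ ∀ u < e, traj step W y ω u ∈ G} with hBdef
    have hBmeas : ∀ e, MeasurableSet (B e) := by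
      intro e
      have hrw : B e = (fun ω => traj step W y ω e) ⁻¹' Gᶜ
          ∩ ⋂ u, ⋂ _ : u < e, (fun ω => traj step W y ω u) ⁻¹' G := by
        ext ω
        simp [hBdef]
      rw [hrw]
      exact ((htraj y e) hG.compl).inter
        (MeasurableSet.iInter fun u => MeasurableSet.iInter fun _ => (htraj y u) hG)
    have hBdisj' : ∀ i j : ℕ, i < j → Disjoint (B i) (B j) := by
      intro i j hij
      refine Set.disjoint_left.mpr fun ω hi hj => ?_
      exact hi.1 (hj.2 i hij)
    have hBdisj : Pairwise (Function.onFun Disjoint B) := fun i j hij =>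
      hij.lt_or_gt.elim (hBdisj' i j) fun h => (hBdisj' j i h).symm
    have hBunion : (⋃ e, B e) = {ω | ∃ t, traj step W y ω t ∉ G} := by
      ext ω
      simp only [Set.mem_iUnion, Set.mem_setOf_eq, hBdef]
      constructor
      · rintro ⟨e, he, -⟩
        exact ⟨e, he⟩
      · intro h
        exact ⟨Nat.find h, Nat.find_spec h, fun u hu => not_not.mp (Nat.find_min h hu)⟩
    have hFsub : F y ⊆ ⋃ e, B e := by
      intro ω hω
      rw [hBunion]
      obtain ⟨t, -, h⟩ := hω 0
      exact ⟨t, h⟩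
    have hFeq : F y = ⋃ e, (B e ∩ F y) := by
      rw [← Set.iUnion_inter]
      exact (Set.inter_eq_right.mpr hFsub).symm
    have hterm : ∀ e, μ (B e ∩ F y) ≤ β * μ (B e) := by
      intro e
      set E' : Set (Fin e → Nsp) :=
        {v | Stmt5Aux.trj step y (Stmt5Aux.pad e v) e ∉ G
          ∧ ∀ u < e, Stmt5Aux.trj step y (Stmt5Aux.pad e v) u ∈ G} with hE'def
      have hE'meas : MeasurableSet E' := by
        have hmeasu : ∀ u, Measurable fun v : Fin e → Nsp =>
            Stmt5Aux.trj step y (Stmt5Aux.pad e v) u := fun u =>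
          (Stmt5Aux.measurable_trj hstep u).comp
            (measurable_const.prodMk (Stmt5Aux.measurable_pad e))
        have hrw : E' = (fun v : Fin e → Nsp => Stmt5Aux.trj step y (Stmt5Aux.pad e v) e) ⁻¹' Gᶜ
            ∩ ⋂ u, ⋂ _ : u < e,
              (fun v : Fin e → Nsp => Stmt5Aux.trj step y (Stmt5Aux.pad e v) u) ⁻¹' G := by
          ext v
          simp [hE'def]
        rw [hrw]
        exact ((hmeasu e) hG.compl).inter
          (MeasurableSet.iInter fun u => MeasurableSet.iInter fun _ => (hmeasu u) hG)
      have hBeq : (fun ω (i : Fin e) => W i ω) ⁻¹' E' = B e := by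
        ext ω
        simp only [Set.mem_preimage, hE'def, Set.mem_setOf_eq, hBdef]
        rw [← hblock y e ω e le_rfl]
        constructor
        · rintro ⟨h1, h2⟩
          exact ⟨h1, fun u hu => by rw [hblock y e ω u (le_of_lt hu)]; exact h2 u hu⟩
        · rintro ⟨h1, h2⟩
          exact ⟨h1, fun u hu => by rw [← hblock y e ω u (le_of_lt hu)]; exact h2 u hu⟩
      have := hbound y e E' hE'meas β fun ω _ => le_iSup (fun z => μ (F z)) _
      rwa [hBeq] at this
    calc μ (F y) = μ (⋃ e, (B e ∩ F y)) := by rw [← hFeq]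
      _ = ∑' e, μ (B e ∩ F y) :=
          measure_iUnion
            (fun i j hij => ((hBdisj hij).mono Set.inter_subset_left Set.inter_subset_left))
            (fun e => (hBmeas e).inter (hFmeas y))
      _ ≤ ∑' e, β * μ (B e) := ENNReal.tsum_le_tsum hterm
      _ = β * ∑' e, μ (B e) := ENNReal.tsum_mul_left
      _ = β * μ (⋃ e, B e) := by rw [measure_iUnion hBdisj hBmeas]
      _ ≤ β * ENNReal.ofReal p := by
          rw [hBunion]
          exact mul_le_mul_right (hleave y hy) β
      _ = ENNReal.ofReal p * β := mul_comm _ _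
  -- main claim: from every state
  have hmain : ∀ y, μ (F y) ≤ ENNReal.ofReal p * β := by
    intro y
    set A : ℕ → Set Ω :=
      fun s => {ω | traj step W y ω s ∈ S ∧ ∀ u < s, traj step W y ω u ∉ S} with hAdef
    have hAmeas : ∀ s, MeasurableSet (A s) := by
      intro s
      have hrw : A s = (fun ω => traj step W y ω s) ⁻¹' S
          ∩ ⋂ u, ⋂ _ : u < s, (fun ω => traj step W y ω u) ⁻¹' Sᶜ := by
        ext ω
        simp [hAdef]
      rw [hrw]
      exact ((htraj y s) hS).inter
        (MeasurableSet.iInter fun u => MeasurableSet.iInter fun _ => (htraj y u) hS.compl)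
    have hAdisj' : ∀ i j : ℕ, i < j → Disjoint (A i) (A j) := by
      intro i j hij
      refine Set.disjoint_left.mpr fun ω hi hj => ?_
      exact hj.2 i hij hi.1
    have hAdisj : Pairwise (Function.onFun Disjoint A) := fun i j hij =>
      hij.lt_or_gt.elim (hAdisj' i j) fun h => (hAdisj' j i h).symm
    have hAunion : (⋃ s, A s) = {ω | ∃ t, traj step W y ω t ∈ S} := by
      ext ω
      simp only [Set.mem_iUnion, Set.mem_setOf_eq, hAdef]
      constructor
      · rintro ⟨s, hs, -⟩
        exact ⟨s, hs⟩
      · intro h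
        exact ⟨Nat.find h, Nat.find_spec h, fun u hu => Nat.find_min h hu⟩
    have hAuniv : μ (⋃ s, A s) = 1 := by
      rw [hAunion]
      exact hreach y
    have hcompl0 : μ (⋃ s, A s)ᶜ = 0 := by
      rw [prob_compl_eq_zero_iff (MeasurableSet.iUnion hAmeas)]
      exact hAuniv
    have hsplit : μ (F y) ≤ ∑' s, μ (A s ∩ F y) := by
      have h1 : μ (F y) ≤ μ (⋃ s, (A s ∩ F y)) + μ (⋃ s, A s)ᶜ := by
        refine le_trans (measure_mono ?_) (measure_union_le _ _)
        intro ω hω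
        by_cases hU : ω ∈ ⋃ s, A s
        · obtain ⟨s, hs⟩ := Set.mem_iUnion.mp hU
          exact Or.inl (Set.mem_iUnion.mpr ⟨s, hs, hω⟩)
        · exact Or.inr hU
      rw [hcompl0, add_zero] at h1
      refine le_trans h1 (le_of_eq ?_)
      exact measure_iUnion
        (fun i j hij => ((hAdisj hij).mono Set.inter_subset_left Set.inter_subset_left))
        (fun s => (hAmeas s).inter (hFmeas y))
    have hterm : ∀ s, μ (A s ∩ F y) ≤ (ENNReal.ofReal p * β) * μ (A s) := by
      intro s
      set E' : Set (Fin s → Nsp) :=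
        {v | Stmt5Aux.trj step y (Stmt5Aux.pad s v) s ∈ S
          ∧ ∀ u < s, Stmt5Aux.trj step y (Stmt5Aux.pad s v) u ∉ S} with hE'def
      have hE'meas : MeasurableSet E' := by
        have hmeasu : ∀ u, Measurable fun v : Fin s → Nsp =>
            Stmt5Aux.trj step y (Stmt5Aux.pad s v) u := fun u =>
          (Stmt5Aux.measurable_trj hstep u).comp
            (measurable_const.prodMk (Stmt5Aux.measurable_pad s))
        have hrw : E' = (fun v : Fin s → Nsp => Stmt5Aux.trj step y (Stmt5Aux.pad s v) s) ⁻¹' S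
            ∩ ⋂ u, ⋂ _ : u < s,
              (fun v : Fin s → Nsp => Stmt5Aux.trj step y (Stmt5Aux.pad s v) u) ⁻¹' Sᶜ := by
          ext v
          simp [hE'def]
        rw [hrw]
        exact ((hmeasu s) hS).inter
          (MeasurableSet.iInter fun u => MeasurableSet.iInter fun _ => (hmeasu u) hS.compl)
      have hAeq : (fun ω (i : Fin s) => W i ω) ⁻¹' E' = A s := by
        ext ω
        simp only [Set.mem_preimage, hE'def, Set.mem_setOf_eq, hAdef]
        rw [← hblock y s ω s le_rfl]
        constructor
        · rintro ⟨h1, h2⟩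
          exact ⟨h1, fun u hu => by rw [hblock y s ω u (le_of_lt hu)]; exact h2 u hu⟩
        · rintro ⟨h1, h2⟩
          exact ⟨h1, fun u hu => by rw [← hblock y s ω u (le_of_lt hu)]; exact h2 u hu⟩
      have hcond : ∀ ω, (fun i : Fin s => W i ω) ∈ E' →
          μ (F (traj step W y ω s)) ≤ ENNReal.ofReal p * β := by
        intro ω hω
        have hmem : ω ∈ A s := by rw [← hAeq]; exact hω
        exact hsub _ hmem.1
      have := hbound y s E' hE'meas (ENNReal.ofReal p * β) hcond
      rwa [hAeq] at this
    calc μ (F y) ≤ ∑' s, μ (A s ∩ F y) := hsplit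
      _ ≤ ∑' s, (ENNReal.ofReal p * β) * μ (A s) := ENNReal.tsum_le_tsum hterm
      _ = (ENNReal.ofReal p * β) * ∑' s, μ (A s) := ENNReal.tsum_mul_left
      _ = (ENNReal.ofReal p * β) * 1 := by rw [← measure_iUnion hAdisj hAmeas, hAuniv]
      _ = ENNReal.ofReal p * β := mul_one _
  have hββ : β ≤ ENNReal.ofReal p * β := iSup_le hmain
  have hβ0 : β = 0 := by
    by_contra h0
    have hβtop : β ≠ ∞ := (lt_of_le_of_lt hβ1 ENNReal.one_lt_top).ne
    have hlt : ENNReal.ofReal p * β < 1 * β :=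
      ENNReal.mul_lt_mul_left h0 hβtop (ENNReal.ofReal_lt_one.mpr hp1)
    rw [one_mul] at hlt
    exact lt_irrefl β (lt_of_le_of_lt hββ hlt)
  have hFx0 : μ (F x) = 0 :=
    le_antisymm (hβ0 ▸ le_iSup (fun y => μ (F y)) x) zero_le
  have hcompl : {ω | ∃ N, ∀ t ≥ N, traj step W x ω t ∈ G} = (F x)ᶜ := by
    ext ω
    simp only [Set.mem_compl_iff, Set.mem_setOf_eq, hF]
    push_neg
    rfl
  rw [hcompl, prob_compl_eq_one_iff (hFmeas x)]
  exact hFx0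
end

section
/- Let V be an (ε, M, δ)-stabilizing ranking supermartingale for a stabilizing set X_s in a discrete-time stochastic system with maximal step size Δ, and let x_1 ∈ X satisfy M < V(x_1) ≤ M + L_V·Δ. Then the probability, starting from x_1, that the trajectory ever reaches a state with V ≥ M + L_V·Δ + δ before reaching the set S = {x : V(x) ≤ M} is at most (M + L_V·Δ)/(M + L_V·Δ + δ). -/
open MeasureTheory Filter Finset
open scoped ENNReal

/-- The ℓ1 norm on `ℝ^n`. -/
noncomputable def l1norm {n : ℕ} (x : Fin n → ℝ) : ℝ := ∑ i, |x i|

open Classical in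
/-- Stopped trajectory as a function of the first `t` noise inputs. -/
noncomputable def stopZ {Xsp Nsp : Type*} (step : Xsp → Nsp → Xsp) (c : Xsp → Prop)
    (x1 : Xsp) : ∀ t : ℕ, (Fin t → Nsp) → Xsp
  | 0 => fun _ => x1
  | (t+1) => fun v =>
      let x := stopZ step c x1 t (fun i => v i.castSucc)
      if c x then x else step x (v (Fin.last t))

lemma stopZ_measurable {Xsp Nsp : Type*} [MeasurableSpace Xsp] [MeasurableSpace Nsp]
    {step : Xsp → Nsp → Xsp} {c : Xsp → Prop} {x1 : Xsp}
    (hstep : Measurable (Function.uncurry step)) (hc : MeasurableSet {x | c x}) :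
    ∀ t, Measurable (stopZ step c x1 t)
  | 0 => measurable_const
  | (t+1) => by
      have h1 : Measurable fun v : Fin (t+1) → Nsp =>
          stopZ step c x1 t (fun i => v i.castSucc) :=
        (stopZ_measurable hstep hc t).comp
          (measurable_pi_lambda _ fun i => measurable_pi_apply _)
      simp only [stopZ]
      exact Measurable.ite (h1 hc) h1 (hstep.comp (h1.prodMk (measurable_pi_apply _)))

/-- Starting from a state `x_1` with `M < V(x_1) ≤ M + L_V·Δ`, the probability that the
trajectory ever reaches a state with `V ≥ M + L_V·Δ + δ` before reaching `S = {V ≤ M}` is at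
most `(M + L_V·Δ)/(M + L_V·Δ + δ)`. -/
theorem stmt8 {n : ℕ} {U Nsp Ω : Type*} [MeasurableSpace Nsp] [MeasurableSpace Ω]
    (μ : Measure Ω) [IsProbabilityMeasure μ] (d : Measure Nsp) [IsProbabilityMeasure d]
    (W : ℕ → Ω → Nsp) (hWmeas : ∀ t, Measurable (W t))
    (hWlaw : ∀ t, Measure.map (W t) μ = d)
    (hWindep : ProbabilityTheory.iIndepFun W μ)
    (Xset Xs : Set (Fin n → ℝ)) (hXmeas : MeasurableSet Xset) (hXsmeas : MeasurableSet Xs)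
    (hXs : Xs ⊆ Xset)
    (f : (Fin n → ℝ) → U → Nsp → (Fin n → ℝ)) (π : (Fin n → ℝ) → U)
    (step : (Fin n → ℝ) → Nsp → (Fin n → ℝ)) (hstepdef : ∀ x ωn, step x ωn = f x (π x) ωn)
    (hstepmeas : Measurable (Function.uncurry step))
    (V : (Fin n → ℝ) → ℝ) (hVmeas : Measurable V)
    (ε M δ Δ LV : ℝ) (hε : 0 < ε) (hM : 0 < M) (hδ : 0 < δ) (hΔ : 0 < Δ) (hLV : 0 < LV)
    -- the system does not leave the state space, and has bounded maximal step size Δ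
    (hclosed : ∀ x ∈ Xset, ∀ ωn : Nsp, f x (π x) ωn ∈ Xset)
    (hstepbd : ∀ x ∈ Xset, ∀ ωn : Nsp, l1norm (x - f x (π x) ωn) ≤ Δ)
    -- `V` is Lipschitz continuous with constant `L_V`
    (hVlip : ∀ x ∈ Xset, ∀ y ∈ Xset, |V x - V y| ≤ LV * l1norm (x - y))
    -- integrability of the one-step expectation
    (hVint : ∀ x ∈ Xset, Integrable (fun ωn => V (f x (π x) ωn)) d)
    -- sRSM condition 1: nonnegativity
    (hnn : ∀ x ∈ Xset, 0 ≤ V x)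
    -- sRSM condition 2: strict expected decrease where `V ≥ M`
    (hdec : ∀ x ∈ Xset, M ≤ V x → ∫ ωn, V (f x (π x) ωn) ∂d ≤ V x - ε)
    -- sRSM condition 3: lower bound outside `X_s`
    (hout : ∀ x ∈ Xset, x ∉ Xs → M + LV * Δ + δ ≤ V x)
    (x1 : Fin n → ℝ) (hx1 : x1 ∈ Xset) (hx1lo : M < V x1) (hx1hi : V x1 ≤ M + LV * Δ) :
    μ {ω | ∃ t2, M + LV * Δ + δ ≤ V (traj step W x1 ω t2) ∧
        ∀ t ≤ t2, ¬ V (traj step W x1 ω t) ≤ M}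
      ≤ ENNReal.ofReal ((M + LV * Δ) / (M + LV * Δ + δ)) := by
  classical
  set lam : ℝ := M + LV * Δ + δ with hlam_def
  set B : ℝ := lam + LV * Δ with hB_def
  have hLVΔ : 0 < LV * Δ := mul_pos hLV hΔ
  have hlam_pos : 0 < lam := by simp only [hlam_def]; linarith
  have hB_pos : 0 < B := by simp only [hB_def]; linarith
  set cnd : (Fin n → ℝ) → Prop := fun x => V x ≤ M ∨ lam ≤ V x with hcnd_def
  have hcndset : MeasurableSet {x | cnd x} := by
    have : {x | cnd x} = V ⁻¹' (Set.Iic M) ∪ V ⁻¹' (Set.Ici lam) := by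
      ext x; simp [hcnd_def]
    rw [this]
    exact (hVmeas measurableSet_Iic).union (hVmeas measurableSet_Ici)
  set φ : ℕ → Ω → (Fin n → ℝ) := fun t ω => stopZ step cnd x1 t (fun i => W i ω) with hφ_def
  set Y : ℕ → Ω → ℝ := fun t ω => V (φ t ω) with hY_def
  have hφ0 : ∀ ω, φ 0 ω = x1 := fun ω => rfl
  have hφsucc : ∀ t ω,
      φ (t + 1) ω = if cnd (φ t ω) then φ t ω else step (φ t ω) (W t ω) := by
    intro t ω
    simp only [hφ_def, stopZ, Fin.coe_castSucc, Fin.val_last]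
  -- step bound for V along one step
  have hVstep : ∀ x ∈ Xset, ∀ ωn, V (step x ωn) ≤ V x + LV * Δ := by
    intro x hx ωn
    rw [hstepdef]
    have h1 := hVlip x hx (f x (π x) ωn) (hclosed x hx ωn)
    have h2 := hstepbd x hx ωn
    have h3 : LV * l1norm (x - f x (π x) ωn) ≤ LV * Δ :=
      mul_le_mul_of_nonneg_left h2 hLV.le
    have h4 : V (f x (π x) ωn) - V x ≤ |V x - V (f x (π x) ωn)| := by
      rw [abs_sub_comm]; exact le_abs_self _
    linarith
  -- invariant: the stopped process stays in Xset with V ≤ B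
  have hK : ∀ t ω, φ t ω ∈ Xset ∧ V (φ t ω) ≤ B := by
    intro t
    induction t with
    | zero => intro ω; refine ⟨hx1, ?_⟩; simp only [hφ0]; simp only [hB_def, hlam_def]; linarith
    | succ t ih =>
      intro ω
      rw [hφsucc t ω]
      by_cases hc : cnd (φ t ω)
      · rw [if_pos hc]; exact ih ω
      · rw [if_neg hc]
        obtain ⟨hmem, _⟩ := ih ω
        have hlt : V (φ t ω) < lam := by
          rcases not_or.mp hc with ⟨_, h2⟩; linarith [lt_of_not_ge h2]
        refine ⟨?_, ?_⟩
        · rw [hstepdef]; exact hclosed _ hmem _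
        · have := hVstep _ hmem (W t ω); simp only [hB_def]; linarith
  have hφmeas : ∀ t, Measurable (φ t) := fun t =>
    (stopZ_measurable hstepmeas hcndset t).comp
      (measurable_pi_lambda _ fun i => hWmeas i)
  have hYmeas : ∀ t, Measurable (Y t) := fun t => hVmeas.comp (hφmeas t)
  have hYnn : ∀ t ω, 0 ≤ Y t ω := fun t ω => hnn _ (hK t ω).1
  have hYleB : ∀ t ω, Y t ω ≤ B := fun t ω => (hK t ω).2
  -- the one step function
  set G : (Fin n → ℝ) × Nsp → ℝ := fun p =>
    if p.1 ∈ Xset ∧ V p.1 ≤ B then (if cnd p.1 then V p.1 else V (step p.1 p.2)) else 0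
    with hG_def
  set Vk : (Fin n → ℝ) → ℝ := fun x => if x ∈ Xset ∧ V x ≤ B then V x else 0 with hVk_def
  have hKset : MeasurableSet {x : Fin n → ℝ | x ∈ Xset ∧ V x ≤ B} := by
    have : {x : Fin n → ℝ | x ∈ Xset ∧ V x ≤ B} = Xset ∩ V ⁻¹' (Set.Iic B) := by
      ext x; exact Iff.rfl
    rw [this]; exact hXmeas.inter (hVmeas measurableSet_Iic)
  have hGmeas : Measurable G := by
    apply Measurable.ite (measurable_fst hKset)
    · apply Measurable.ite (measurable_fst hcndset) (hVmeas.comp measurable_fst)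
      exact hVmeas.comp hstepmeas
    · exact measurable_const
  have hVkmeas : Measurable Vk := Measurable.ite hKset hVmeas measurable_const
  have hGbd : ∀ p, 0 ≤ G p ∧ G p ≤ B := by
    rintro ⟨x, nn⟩
    simp only [hG_def]
    by_cases hk : x ∈ Xset ∧ V x ≤ B
    · rw [if_pos hk]
      by_cases hc : cnd x
      · rw [if_pos hc]; exact ⟨hnn x hk.1, hk.2⟩
      · rw [if_neg hc]
        have hxX : step x nn ∈ Xset := by rw [hstepdef]; exact hclosed _ hk.1 _
        have hlt : V x < lam := by
          rcases not_or.mp hc with ⟨_, h2⟩; exact lt_of_not_ge h2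
        refine ⟨hnn _ hxX, ?_⟩
        have := hVstep x hk.1 nn; simp only [hB_def]; linarith
    · rw [if_neg hk]; exact ⟨le_refl 0, hB_pos.le⟩
  have hVkbd : ∀ x, 0 ≤ Vk x ∧ Vk x ≤ B := by
    intro x
    simp only [hVk_def]
    by_cases hk : x ∈ Xset ∧ V x ≤ B
    · rw [if_pos hk]; exact ⟨hnn x hk.1, hk.2⟩
    · rw [if_neg hk]; exact ⟨le_refl 0, hB_pos.le⟩
  -- one-step expected decrease of the stopped process
  have hstep1 : ∀ t, ∫ ω, Y (t + 1) ω ∂μ ≤ ∫ ω, Y t ω ∂μ := by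
    intro t
    set ν : Measure (Fin n → ℝ) := μ.map (φ t) with hν_def
    haveI : IsProbabilityMeasure ν := Measure.isProbabilityMeasure_map (hφmeas t).aemeasurable
    -- independence of φ t and W t
    have hind : ProbabilityTheory.IndepFun (φ t) (W t) μ := by
      have h := hWindep.indepFun_finset (Finset.range t) {t}
        (by simp [Finset.disjoint_left]; omega) hWmeas
      have he : Measurable fun v : ↥(Finset.range t) → Nsp =>
          stopZ step cnd x1 t (fun i : Fin t =>
            v ⟨(i : ℕ), Finset.mem_range.mpr i.2⟩) :=
        (stopZ_measurable hstepmeas hcndset t).comp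
          (measurable_pi_lambda _ fun i => measurable_pi_apply _)
      have hev : Measurable fun v : ↥({t} : Finset ℕ) → Nsp =>
          v ⟨t, Finset.mem_singleton_self t⟩ := measurable_pi_apply _
      exact h.comp he hev
    have hpair : μ.map (fun ω => (φ t ω, W t ω)) = ν.prod d := by
      rw [(ProbabilityTheory.indepFun_iff_map_prod_eq_prod_map_map
        (hφmeas t).aemeasurable (hWmeas t).aemeasurable).mp hind, hWlaw t]
    have hGint : Integrable G (ν.prod d) := by
      refine (integrable_const B).mono' hGmeas.aestronglyMeasurable ?_
      filter_upwards with p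
      rw [Real.norm_eq_abs, abs_le]
      exact ⟨by linarith [(hGbd p).1, hB_pos], (hGbd p).2⟩
    have hVkint : Integrable Vk ν := by
      refine (integrable_const B).mono' hVkmeas.aestronglyMeasurable ?_
      filter_upwards with x
      rw [Real.norm_eq_abs, abs_le]
      exact ⟨by linarith [(hVkbd x).1, hB_pos], (hVkbd x).2⟩
    have hinner : ∀ x, ∫ nn, G (x, nn) ∂d ≤ Vk x := by
      intro x
      by_cases hk : x ∈ Xset ∧ V x ≤ B
      · by_cases hc : cnd x
        · simp only [hG_def, hVk_def, if_pos hk, if_pos hc, integral_const, measure_univ,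
            probReal_univ, smul_eq_mul, one_mul, le_refl]
        · have hMx : M ≤ V x := by
            rcases not_or.mp hc with ⟨h1, _⟩; linarith [lt_of_not_ge h1]
          have hdx := hdec x hk.1 hMx
          have : (fun nn => G (x, nn)) = fun nn => V (f x (π x) nn) := by
            funext nn; simp only [hG_def, if_pos hk, if_neg hc, hstepdef]
          rw [this]
          simp only [hVk_def, if_pos hk]
          linarith
      · simp only [hG_def, hVk_def, if_neg hk, integral_const, measure_univ,
          probReal_univ, smul_eq_mul, one_mul, le_refl]
    calc ∫ ω, Y (t + 1) ω ∂μ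
        = ∫ ω, G (φ t ω, W t ω) ∂μ := by
          refine integral_congr_ae (Eventually.of_forall fun ω => ?_)
          have hk := hK t ω
          rw [hY_def]
          simp only [hφsucc t ω, hG_def, if_pos hk]
          by_cases hc : cnd (φ t ω)
          · rw [if_pos hc, if_pos hc]
          · rw [if_neg hc, if_neg hc]
      _ = ∫ p, G p ∂(μ.map (fun ω => (φ t ω, W t ω))) := by
          rw [integral_map ((hφmeas t).prodMk (hWmeas t)).aemeasurable
            hGmeas.aestronglyMeasurable]
      _ = ∫ p, G p ∂(ν.prod d) := by rw [hpair]
      _ = ∫ x, ∫ nn, G (x, nn) ∂d ∂ν := integral_prod _ hGint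
      _ ≤ ∫ x, Vk x ∂ν := integral_mono hGint.integral_prod_left hVkint hinner
      _ = ∫ ω, Vk (φ t ω) ∂μ := integral_map (hφmeas t).aemeasurable
            hVkmeas.aestronglyMeasurable
      _ = ∫ ω, Y t ω ∂μ := by
          refine integral_congr_ae (Eventually.of_forall fun ω => ?_)
          simp only [hVk_def, hY_def, if_pos (hK t ω)]
  -- iterate
  have hiter : ∀ T, ∫ ω, Y T ω ∂μ ≤ V x1 := by
    intro T
    induction T with
    | zero =>
      have : (fun ω => Y 0 ω) = fun _ => V x1 := by
        funext ω; show V (φ 0 ω) = V x1; rw [hφ0]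
      rw [this, integral_const]; simp
    | succ T ih => exact (hstep1 T).trans ih
  -- Markov inequality at level lam for each T
  set A : ℕ → Set Ω := fun T => {ω | lam ≤ Y T ω} with hA_def
  have hYint : ∀ T, Integrable (Y T) μ := by
    intro T
    refine (integrable_const B).mono' (hYmeas T).aestronglyMeasurable ?_
    filter_upwards with ω
    rw [Real.norm_eq_abs, abs_le]
    exact ⟨by linarith [hYnn T ω, hB_pos], hYleB T ω⟩
  have hbT : ∀ T, μ (A T) ≤ ENNReal.ofReal ((M + LV * Δ) / lam) := by
    intro T
    have hmar := mul_meas_ge_le_integral_of_nonneg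
      (Eventually.of_forall (hYnn T)) (hYint T) lam
    have h1 : lam * (μ (A T)).toReal ≤ M + LV * Δ := by
      refine hmar.trans ((hiter T).trans hx1hi)
    have h2 : (μ (A T)).toReal ≤ (M + LV * Δ) / lam := by
      rw [le_div_iff₀ hlam_pos]; linarith [h1]
    calc μ (A T) = ENNReal.ofReal (μ (A T)).toReal :=
          (ENNReal.ofReal_toReal (measure_ne_top μ _)).symm
      _ ≤ ENNReal.ofReal ((M + LV * Δ) / lam) := ENNReal.ofReal_le_ofReal h2
  -- A is monotone
  have hAmono : Monotone A := by
    refine monotone_nat_of_le_succ fun T ω hω => ?_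
    have hc : cnd (φ T ω) := Or.inr hω
    have : φ (T + 1) ω = φ T ω := by rw [hφsucc T ω, if_pos hc]
    show lam ≤ V (φ (T + 1) ω)
    rw [this]
    exact hω
  -- the event is contained in the union of the A T
  have hsub : {ω | ∃ t2, M + LV * Δ + δ ≤ V (traj step W x1 ω t2) ∧
      ∀ t ≤ t2, ¬ V (traj step W x1 ω t) ≤ M} ⊆ ⋃ T, A T := by
    intro ω hω
    obtain ⟨t2, h1, h2⟩ := hω
    have hex : ∃ t, cnd (traj step W x1 ω t) := ⟨t2, Or.inr h1⟩
    set ts := Nat.find hex with hts_def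
    have hts_le : ts ≤ t2 := Nat.find_le (Or.inr h1)
    have hagree : ∀ t, t ≤ ts → φ t ω = traj step W x1 ω t := by
      intro t
      induction t with
      | zero => intro _; rw [hφ0]; rfl
      | succ t ih =>
        intro ht
        have htlt : t < ts := ht
        have hnc : ¬ cnd (traj step W x1 ω t) := Nat.find_min hex htlt
        rw [hφsucc t ω, ih htlt.le, if_neg hnc]
        rfl
    have hcts : cnd (traj step W x1 ω ts) := Nat.find_spec hex
    have hnotM : ¬ V (traj step W x1 ω ts) ≤ M := h2 ts hts_le
    have hge : lam ≤ V (traj step W x1 ω ts) := by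
      rcases hcts with h | h
      · exact absurd h hnotM
      · exact h
    refine Set.mem_iUnion.mpr ⟨ts, ?_⟩
    show lam ≤ V (φ ts ω)
    rw [hagree ts le_rfl]
    exact hge
  calc μ {ω | ∃ t2, M + LV * Δ + δ ≤ V (traj step W x1 ω t2) ∧
        ∀ t ≤ t2, ¬ V (traj step W x1 ω t) ≤ M}
      ≤ μ (⋃ T, A T) := measure_mono hsub
    _ = ⨆ T, μ (A T) := (hAmono.directed_le).measure_iUnion
    _ ≤ ENNReal.ofReal ((M + LV * Δ) / lam) := iSup_le hbT
    _ = ENNReal.ofReal ((M + LV * Δ) / (M + LV * Δ + δ)) := by rw [hlam_def]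
end

section
/- Let X̃ be a τ-discretization of a set X ⊆ ℝ^n (i.e., for every x ∈ X there exists x̃ ∈ X̃ with ||x − x̃||_1 ≤ τ), and let V, π, f be Lipschitz with constants L_V, L_π, L_f, K = L_V·(L_f·(L_π + 1) + 1). Suppose for every x̃ ∈ X̃ with the property that some x ∈ X in the τ-ball around x̃ has V(x) ≥ M, the strict inequality E_{ω~d}[V(f(x̃, π(x̃), ω))] < V(x̃) − τ·K holds. Then for every x ∈ X with V(x) ≥ M, E_{ω~d}[V(f(x, π(x), ω))] < V(x). -/
open Finset MeasureTheory

lemma l1norm_neg' {n : ℕ} (x : Fin n → ℝ) : l1norm (-x) = l1norm x := by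
  simp [l1norm, abs_neg]

lemma l1norm_nonneg' {n : ℕ} (x : Fin n → ℝ) : 0 ≤ l1norm x :=
  Finset.sum_nonneg fun i _ => abs_nonneg _

/-- Soundness of the verifier's discretized check: if the strict inequality
`E[V(f(x̃,π(x̃),ω))] < V(x̃) − τ·K` holds at every discretization point `x̃` whose `τ`-ball
contains a state with `V ≥ M`, then `E[V(f(x,π(x),ω))] < V(x)` at every state `x` with
`V(x) ≥ M`. -/
theorem stmt13 {n m : ℕ} {Nsp : Type*} [MeasurableSpace Nsp]
    (d : Measure Nsp) [IsProbabilityMeasure d]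
    (Xset Xtil : Set (Fin n → ℝ)) (hfin : Xtil.Finite) (hsub : Xtil ⊆ Xset)
    (f : (Fin n → ℝ) → (Fin m → ℝ) → Nsp → (Fin n → ℝ))
    (π : (Fin n → ℝ) → (Fin m → ℝ)) (V : (Fin n → ℝ) → ℝ)
    (Lf Lπ LV τ K M : ℝ) (hLf : 0 < Lf) (hLπ : 0 < Lπ) (hLV : 0 < LV) (hτ : 0 < τ)
    (hmesh : ∀ x ∈ Xset, ∃ xt ∈ Xtil, l1norm (x - xt) ≤ τ)
    (hVlip : ∀ a b, |V a - V b| ≤ LV * l1norm (a - b))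
    (hflip : ∀ a b u v, ∀ ω : Nsp,
      l1norm (f a u ω - f b v ω) ≤ Lf * (l1norm (a - b) + l1norm (u - v)))
    (hπlip : ∀ a b, l1norm (π a - π b) ≤ Lπ * l1norm (a - b))
    (hK : K = LV * (Lf * (Lπ + 1) + 1))
    (hint : ∀ x : Fin n → ℝ, Integrable (fun ω => V (f x (π x) ω)) d)
    (hcheck : ∀ xt ∈ Xtil, (∃ x ∈ Xset, l1norm (x - xt) ≤ τ ∧ M ≤ V x) →
      ∫ ω, V (f xt (π xt) ω) ∂d < V xt - τ * K) :
    ∀ x ∈ Xset, M ≤ V x → ∫ ω, V (f x (π x) ω) ∂d < V x := by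
  intro x hx hM
  obtain ⟨xt, hxt, hdist⟩ := hmesh x hx
  have hd0 : 0 ≤ l1norm (x - xt) := l1norm_nonneg' _
  set c : ℝ := LV * (Lf * (τ + Lπ * τ)) with hc
  have hπb : l1norm (π x - π xt) ≤ Lπ * τ :=
    (hπlip x xt).trans (by nlinarith)
  have hpt : ∀ ω, V (f x (π x) ω) ≤ V (f xt (π xt) ω) + c := by
    intro ω
    have h1 := hflip x xt (π x) (π xt) ω
    have h2 := hVlip (f x (π x) ω) (f xt (π xt) ω)
    have h3 : V (f x (π x) ω) - V (f xt (π xt) ω) ≤ LV * l1norm (f x (π x) ω - f xt (π xt) ω) :=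
      (le_abs_self _).trans h2
    have h4 : l1norm (f x (π x) ω - f xt (π xt) ω) ≤ Lf * (τ + Lπ * τ) :=
      h1.trans (by nlinarith)
    nlinarith
  have hI : ∫ ω, V (f x (π x) ω) ∂d ≤ (∫ ω, V (f xt (π xt) ω) ∂d) + c := by
    have := integral_mono (hint x) ((hint xt).add (integrable_const c)) hpt
    simpa [integral_add (hint xt) (integrable_const c), measure_univ] using this
  have hch : ∫ ω, V (f xt (π xt) ω) ∂d < V xt - τ * K :=
    hcheck xt hxt ⟨x, hx, hdist, hM⟩
  have hVxt : V xt ≤ V x + LV * τ := by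
    have h := hVlip xt x
    have : l1norm (xt - x) = l1norm (x - xt) := by
      rw [← l1norm_neg' (xt - x)]; ring_nf
    rw [this] at h
    have := (le_abs_self (V xt - V x)).trans h
    nlinarith
  have : c = τ * K - LV * τ := by rw [hK, hc]; ring
  linarith
end
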